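/- Let ξ : ℝ → ℂ be a continuously differentiable (C¹) function with ξ(θ + 2π) = ξ(θ) for all θ. Then the commutator F∘M(ξ) − M(ξ)∘F is a Hilbert–Schmidt operator on H; concretely, ∑_{k,l ∈ ℤ} |⟨e_k, (F∘M(ξ) − M(ξ)∘F) e_l⟩|² < ∞. -/

import Mathlib

open MeasureTheory
open scoped ENNReal

noncomputable section

instance fact_two_pi_pos : Fact (0 < 2 * Real.pi) := ⟨by positivity⟩

/-- The Hilbert space `H = L²(ℝ/2πℤ, ℂ)`, with inner product
`⟨ξ,η⟩ = (1/2π)∫₀^{2π} conj(ξ θ) η θ dθ` (i.e. `L²` of the normalized Haar measure on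
`ℝ/2πℤ`). -/
abbrev H : Type := MeasureTheory.Lp ℂ 2 (AddCircle.haarAddCircle (T := 2 * Real.pi))

/-- The Hilbert basis vector `e k = (θ ↦ exp (i k θ))` of `H`. -/
def e (k : ℤ) : H := fourierLp 2 k

/-- `H₊`, the closed subspace of `H` spanned by the `e k`, `k ≥ 0`. -/
def Hplus : Submodule ℂ H :=
  (Submodule.span ℂ (Set.range fun n : ℕ => e n)).topologicalClosure

instance : CompleteSpace Hplus :=
  (Submodule.isClosed_topologicalClosure _).completeSpace_coe

/-- `P₊`, the orthogonal projection of `H` onto `H₊` (as an operator `H → H`). -/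
def Pplus : H →L[ℂ] H := Hplus.subtypeL.comp Hplus.orthogonalProjectionOnto

/-- `F = P₊ - P₋` where `P₋ = 1 - P₊`. -/
def Fop : H →L[ℂ] H := Pplus - (1 - Pplus)

/-- `M` is the bounded operator on `H` of multiplication by the (`2π`-periodic)
function `q : ℝ → ℂ`. -/
def IsMulOp (q : ℝ → ℂ) (M : H →L[ℂ] H) : Prop :=
  ∀ ξ : H, ∀ᵐ θ : ℝ,
    (M ξ : AddCircle (2 * Real.pi) → ℂ) (θ : AddCircle (2 * Real.pi))
      = q θ * (ξ : AddCircle (2 * Real.pi) → ℂ) (θ : AddCircle (2 * Real.pi))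

/-! ### Auxiliary definitions and lemmas -/

/-- The "sign" of an integer (as used for `F`): `1` if `0 ≤ n`, `-1` otherwise. -/
def sgn (n : ℤ) : ℂ := if 0 ≤ n then 1 else -1

lemma e_mem_Hplus {n : ℤ} (hn : 0 ≤ n) : e n ∈ Hplus :=
  Submodule.le_topologicalClosure _ (Submodule.subset_span
    ⟨n.toNat, by show e ↑n.toNat = e n; rw [Int.toNat_of_nonneg hn]⟩)

lemma e_orth {n : ℤ} (hn : n < 0) : e n ∈ Hplusᗮ := by
  rw [Submodule.mem_orthogonal]
  intro u hu
  have hle : Hplus ≤ (ℂ ∙ (e n))ᗮ := by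
    apply Submodule.topologicalClosure_minimal
    · rw [Submodule.span_le]
      rintro _ ⟨m, rfl⟩
      rw [SetLike.mem_coe, Submodule.mem_orthogonal_singleton_iff_inner_left]
      exact orthonormal_fourier.2 (by omega : (m : ℤ) ≠ n)
    · exact Submodule.isClosed_orthogonal _
  exact Submodule.mem_orthogonal_singleton_iff_inner_left.mp (hle hu)

lemma Pplus_e_nonneg {n : ℤ} (hn : 0 ≤ n) : Pplus (e n) = e n := by
  have h := Submodule.orthogonalProjectionOnto_mem_subspace_eq_self (K := Hplus) ⟨e n, e_mem_Hplus hn⟩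
  simp only [Pplus, ContinuousLinearMap.comp_apply]
  rw [show ((⟨e n, e_mem_Hplus hn⟩ : Hplus) : H) = e n from rfl] at h
  rw [h]; rfl

lemma Pplus_e_neg {n : ℤ} (hn : n < 0) : Pplus (e n) = 0 := by
  simp only [Pplus, ContinuousLinearMap.comp_apply]
  rw [Submodule.orthogonalProjectionOnto_apply_of_mem_orthogonal (e_orth hn)]
  rfl

lemma Fop_apply (y : H) : Fop y = (2 : ℂ) • Pplus y - y := by
  simp only [Fop, ContinuousLinearMap.sub_apply, ContinuousLinearMap.one_apply, two_smul]
  abel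

lemma Fop_e (n : ℤ) : Fop (e n) = sgn n • e n := by
  rcases le_or_gt 0 n with hn | hn
  · rw [Fop_apply, Pplus_e_nonneg hn, sgn, if_pos hn, two_smul, one_smul]; abel
  · rw [Fop_apply, Pplus_e_neg hn, sgn, if_neg (not_le.mpr hn), smul_zero, neg_smul, one_smul,
      zero_sub]

lemma inner_Fop (k : ℤ) (y : H) : (inner ℂ (e k) (Fop y) : ℂ) = sgn k * inner ℂ (e k) y := by
  rw [Fop_apply, inner_sub_right, inner_smul_right]
  have h : (inner ℂ (e k) (Pplus y) : ℂ) = inner ℂ ((Pplus (e k)) : H) y := by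
    simp only [Pplus, ContinuousLinearMap.comp_apply]
    exact (Submodule.inner_starProjection_left_eq_right Hplus (e k) y).symm
  rcases le_or_gt 0 k with hk | hk
  · rw [h, Pplus_e_nonneg hk, sgn, if_pos hk]; ring
  · rw [h, Pplus_e_neg hk, sgn, if_neg (not_le.mpr hk), inner_zero_left]; ring

lemma inner_eq_coeff (g : H) (k : ℤ) :
    (inner ℂ (e k) g : ℂ) = fourierCoeff (g : AddCircle (2 * Real.pi) → ℂ) k := by
  rw [← fourierBasis_repr, HilbertBasis.repr_apply_apply]
  congr 1
  rw [coe_fourierBasis]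
  rfl

lemma ae_real_of_ae_circle {p : AddCircle (2 * Real.pi) → Prop}
    (h : ∀ᵐ x ∂(AddCircle.haarAddCircle (T := 2 * Real.pi)), p x) :
    ∀ᵐ θ : ℝ ∂(volume.restrict (Set.Ioc (0:ℝ) (0 + 2 * Real.pi))),
      p (θ : AddCircle (2 * Real.pi)) := by
  have h1 : ∀ᵐ x ∂((volume.restrict (Set.Ioc (0:ℝ) (0 + 2 * Real.pi))).map
      (fun θ : ℝ => (θ : AddCircle (2 * Real.pi)))), p x := by
    rw [(AddCircle.measurePreserving_mk (2 * Real.pi) 0).map_eq,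
      AddCircle.volume_eq_smul_haarAddCircle]
    exact Measure.ae_smul_measure h _
  exact ae_of_ae_map ((AddCircle.continuous_mk' (2 * Real.pi)).measurable.aemeasurable) h1

lemma inner_M_eq (ξ : ℝ → ℂ) (hper : Function.Periodic ξ (2 * Real.pi))
    (M : H →L[ℂ] H) (hM : IsMulOp ξ M) (k l : ℤ) :
    (inner ℂ (e k) (M (e l)) : ℂ) = fourierCoeff hper.lift (k - l) := by
  rw [inner_eq_coeff]
  rw [fourierCoeff_eq_intervalIntegral _ k 0, fourierCoeff_eq_intervalIntegral _ (k - l) 0]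
  congr 1
  apply intervalIntegral.integral_congr_ae
  have hMl := (hM (e l)).filter_mono (ae_mono (Measure.restrict_le_self
    (s := Set.Ioc (0:ℝ) (0 + 2 * Real.pi))))
  have hel := ae_real_of_ae_circle (coeFn_fourierLp (T := 2 * Real.pi) 2 l)
  rw [Set.uIoc_of_le (by positivity : (0:ℝ) ≤ 0 + 2 * Real.pi)]
  rw [← ae_restrict_iff' measurableSet_Ioc]
  filter_upwards [hMl, hel] with x h1 h2
  rw [h1, show e l = fourierLp (T := 2 * Real.pi) 2 l from rfl, h2,
    Function.Periodic.lift_coe, smul_eq_mul, smul_eq_mul,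
    show -(k - l) = -k + l by ring, fourier_add]
  ring

lemma cont_lift {f : ℝ → ℂ} (hf : Continuous f) (hp : Function.Periodic f (2 * Real.pi)) :
    Continuous hp.lift :=
  hf.quotient_liftOn' _

lemma summable_sq_coeff {f : AddCircle (2 * Real.pi) → ℂ} (hf : Continuous f) :
    Summable (fun n : ℤ => ‖fourierCoeff f n‖ ^ 2) := by
  set g : H := ContinuousMap.toLp (E := ℂ) 2 (AddCircle.haarAddCircle (T := 2 * Real.pi)) ℂ
    ⟨f, hf⟩ with hg
  have h : ∀ n : ℤ, fourierCoeff f n = inner ℂ (fourierLp 2 n) g := by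
    intro n
    have h1 : fourierCoeff (g : AddCircle (2 * Real.pi) → ℂ) n = fourierCoeff f n := by
      unfold fourierCoeff
      apply integral_congr_ae
      filter_upwards [ContinuousMap.coeFn_toLp (E := ℂ) (p := 2) (𝕜 := ℂ)
        (AddCircle.haarAddCircle (T := 2 * Real.pi)) ⟨f, hf⟩] with x hx
      rw [hg, hx]
      rfl
    rw [← h1, ← fourierBasis_repr, HilbertBasis.repr_apply_apply, coe_fourierBasis]
  simp_rw [h]
  exact orthonormal_fourier.inner_products_summable g

lemma periodic_deriv_of_periodic {f : ℝ → ℂ} (hf : Function.Periodic f (2 * Real.pi)) :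
    Function.Periodic (deriv f) (2 * Real.pi) := by
  intro x
  rw [← deriv_comp_add_const]
  congr 1
  funext y
  exact hf y

lemma coeff_deriv (ξ : ℝ → ℂ) (hper : Function.Periodic ξ (2 * Real.pi))
    (hC1 : ContDiff ℝ 1 ξ) (hper' : Function.Periodic (deriv ξ) (2 * Real.pi)) (n : ℤ) :
    fourierCoeff hper'.lift n = (Complex.I * n) * fourierCoeff hper.lift n := by
  have hπ : (0:ℝ) < 2 * Real.pi := by positivity
  set B : ℝ → ℂ := fun x => fourier (-n) (x : AddCircle (2 * Real.pi)) with hB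
  have hBcont : Continuous B := (fourier (-n)).continuous.comp (AddCircle.continuous_mk' _)
  have hξcont : Continuous ξ := hC1.continuous
  have hdcont : Continuous (deriv ξ) := hC1.continuous_deriv le_rfl
  set cst : ℂ := -2 * Real.pi * Complex.I * n / (2 * Real.pi : ℝ) with hcst
  have hkey : ∫ x in (0:ℝ)..(0 + 2 * Real.pi), (deriv ξ x * B x + ξ x * (cst * B x))
      = ξ (0 + 2 * Real.pi) * B (0 + 2 * Real.pi) - ξ 0 * B 0 := by
    apply intervalIntegral.integral_deriv_mul_eq_sub_of_hasDerivAt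
    · exact hξcont.continuousOn
    · exact hBcont.continuousOn
    · exact fun x _ => (hC1.differentiable one_ne_zero x).hasDerivAt
    · exact fun x _ => hasDerivAt_fourier_neg (2 * Real.pi) n x
    · exact hdcont.intervalIntegrable _ _
    · exact (continuous_const.mul hBcont).intervalIntegrable _ _
  have hB0 : B (0 + 2 * Real.pi) = B 0 := by
    rw [hB]
    norm_num [AddCircle.coe_period]
  rw [hper 0, hB0, sub_self] at hkey
  have hint1 : IntervalIntegrable (fun x => deriv ξ x * B x) volume 0 (0 + 2 * Real.pi) :=
    (hdcont.mul hBcont).intervalIntegrable _ _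
  have hint2 : IntervalIntegrable (fun x => ξ x * (cst * B x)) volume 0 (0 + 2 * Real.pi) :=
    (hξcont.mul (continuous_const.mul hBcont)).intervalIntegrable _ _
  rw [intervalIntegral.integral_add hint1 hint2] at hkey
  have hcstval : -cst = Complex.I * n := by
    rw [hcst]
    have hπc : (Real.pi : ℂ) ≠ 0 := by exact_mod_cast Real.pi_ne_zero
    push_cast
    field_simp
  rw [fourierCoeff_eq_intervalIntegral _ n 0, fourierCoeff_eq_intervalIntegral _ n 0]
  have e1 : (∫ x in (0:ℝ)..(0 + 2 * Real.pi),
      fourier (-n) (x : AddCircle (2 * Real.pi)) • hper'.lift (x : AddCircle (2 * Real.pi)))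
      = ∫ x in (0:ℝ)..(0 + 2 * Real.pi), deriv ξ x * B x := by
    apply intervalIntegral.integral_congr
    intro x _
    simp only [Function.Periodic.lift_coe, smul_eq_mul, hB, mul_comm]
  have e2 : (∫ x in (0:ℝ)..(0 + 2 * Real.pi),
      fourier (-n) (x : AddCircle (2 * Real.pi)) • hper.lift (x : AddCircle (2 * Real.pi)))
      = ∫ x in (0:ℝ)..(0 + 2 * Real.pi), ξ x * B x := by
    apply intervalIntegral.integral_congr
    intro x _
    simp only [Function.Periodic.lift_coe, smul_eq_mul, hB, mul_comm]
  rw [e1, e2]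
  have e4 : (∫ x in (0:ℝ)..(0 + 2 * Real.pi), ξ x * (cst * B x))
      = cst * ∫ x in (0:ℝ)..(0 + 2 * Real.pi), ξ x * B x := by
    rw [← intervalIntegral.integral_const_mul]
    apply intervalIntegral.integral_congr
    intro x _
    ring
  rw [e4] at hkey
  have e3 : (∫ x in (0:ℝ)..(0 + 2 * Real.pi), deriv ξ x * B x)
      = (Complex.I * n) * ∫ x in (0:ℝ)..(0 + 2 * Real.pi), ξ x * B x := by
    rw [← hcstval]
    linear_combination hkey
  rw [e3]
  rw [mul_smul_comm]

lemma card_fiber_le (v : Finset (ℤ × ℤ)) (hv : ∀ p ∈ v, ¬(0 ≤ p.1 ↔ 0 ≤ p.2)) (m : ℤ)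
    [DecidablePred fun p : ℤ × ℤ => p.1 - p.2 = m] :
    (v.filter (fun p => p.1 - p.2 = m)).card ≤ 2 * m.natAbs := by
  classical
  have h := Finset.card_le_card_of_injOn (s := v.filter (fun p => p.1 - p.2 = m))
    (f := Prod.fst) (t := Finset.Ico (-(m.natAbs : ℤ)) (m.natAbs : ℤ)) ?_ ?_
  · calc (v.filter (fun p => p.1 - p.2 = m)).card
        ≤ (Finset.Ico (-(m.natAbs : ℤ)) (m.natAbs : ℤ)).card := h
      _ = 2 * m.natAbs := by rw [Int.card_Ico]; omega
  · intro p hp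
    rw [Finset.mem_coe, Finset.mem_filter] at hp
    obtain ⟨hpv, hpm⟩ := hp
    have hmis := hv p hpv
    rw [Finset.mem_coe, Finset.mem_Ico]
    rcases le_or_gt 0 p.1 with h1 | h1 <;> rcases le_or_gt 0 p.2 with h2 | h2
    · exact absurd (iff_of_true h1 h2) hmis
    · omega
    · omega
    · exact absurd (iff_of_false (not_le.mpr h1) (not_le.mpr h2)) hmis
  · intro p hp q hq hpq
    simp only [Finset.coe_filter, Set.mem_setOf_eq] at hp hq
    obtain ⟨-, hpm⟩ := hp
    obtain ⟨-, hqm⟩ := hq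
    exact Prod.ext hpq (by omega)

lemma sum_bound (c d : ℤ → ℝ) (hc0 : ∀ m, 0 ≤ c m) (hd0 : ∀ m, 0 ≤ d m)
    (hcd : ∀ m, (2 * m.natAbs : ℝ) * c m ≤ 2 * d m) (hd : Summable d)
    (v : Finset (ℤ × ℤ)) (hv : ∀ p ∈ v, ¬(0 ≤ p.1 ↔ 0 ≤ p.2)) :
    ∑ p ∈ v, c (p.1 - p.2) ≤ 2 * ∑' m, d m := by
  classical
  rw [← Finset.sum_fiberwise_of_maps_to
    (g := fun p : ℤ × ℤ => p.1 - p.2) (t := v.image fun p : ℤ × ℤ => p.1 - p.2)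
    (fun p hp => Finset.mem_image_of_mem _ hp) (fun p => c (p.1 - p.2))]
  have step : ∀ m ∈ v.image (fun p : ℤ × ℤ => p.1 - p.2),
      ∑ p ∈ v.filter (fun p => p.1 - p.2 = m), c (p.1 - p.2) ≤ 2 * d m := by
    intro m _
    have h1 : ∑ p ∈ v.filter (fun p => p.1 - p.2 = m), c (p.1 - p.2)
        = (v.filter (fun p => p.1 - p.2 = m)).card * c m := by
      rw [Finset.sum_congr rfl (fun p hp => by
        rw [(Finset.mem_filter.mp hp).2]), Finset.sum_const, nsmul_eq_mul]
    rw [h1]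
    calc ((v.filter (fun p => p.1 - p.2 = m)).card : ℝ) * c m
        ≤ (2 * m.natAbs : ℝ) * c m := by
          apply mul_le_mul_of_nonneg_right _ (hc0 m)
          exact_mod_cast card_fiber_le v hv m
      _ ≤ 2 * d m := hcd m
  calc ∑ m ∈ v.image (fun p : ℤ × ℤ => p.1 - p.2),
        ∑ p ∈ v.filter (fun p => p.1 - p.2 = m), c (p.1 - p.2)
      ≤ ∑ m ∈ v.image (fun p : ℤ × ℤ => p.1 - p.2), 2 * d m := Finset.sum_le_sum step
    _ = 2 * ∑ m ∈ v.image (fun p : ℤ × ℤ => p.1 - p.2), d m := by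
        rw [Finset.mul_sum]
    _ ≤ 2 * ∑' m, d m := by
        apply mul_le_mul_of_nonneg_left _ (by norm_num)
        exact hd.sum_le_tsum _ (fun m _ => hd0 m)

theorem stmt_1 (ξ : ℝ → ℂ) (hper : ∀ θ, ξ (θ + 2 * Real.pi) = ξ θ)
    (hC1 : ContDiff ℝ 1 ξ) (M : H →L[ℂ] H) (hM : IsMulOp ξ M) :
    Summable (fun kl : ℤ × ℤ =>
      ‖(inner ℂ (e kl.1) ((Fop.comp M - M.comp Fop) (e kl.2)) : ℂ)‖ ^ 2) := by
  classical
  have hperP : Function.Periodic ξ (2 * Real.pi) := hper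
  have hper' : Function.Periodic (deriv ξ) (2 * Real.pi) := periodic_deriv_of_periodic hperP
  have hdcont : Continuous (deriv ξ) := hC1.continuous_deriv le_rfl
  set C : ℤ → ℂ := fun m => fourierCoeff hperP.lift m with hC
  set D : ℤ → ℝ := fun m => ‖fourierCoeff hper'.lift m‖ ^ 2 with hD
  have hDsum : Summable D := summable_sq_coeff (cont_lift hdcont hper')
  have hDval : ∀ m : ℤ, D m = ((m.natAbs : ℝ)) ^ 2 * ‖C m‖ ^ 2 := by
    intro m
    rw [hD]
    simp only
    rw [coeff_deriv ξ hperP hC1 hper' m, norm_mul, norm_mul, Complex.norm_I, one_mul, mul_pow]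
    congr 2
    rw [Complex.norm_intCast, ← Int.cast_abs, Int.abs_eq_natAbs, Int.cast_natCast]
  have hentry : ∀ k l : ℤ, (inner ℂ (e k) ((Fop.comp M - M.comp Fop) (e l)) : ℂ)
      = (sgn k - sgn l) * C (k - l) := by
    intro k l
    rw [show (Fop.comp M - M.comp Fop) (e l) = Fop (M (e l)) - M (Fop (e l)) from rfl]
    rw [inner_sub_right, inner_Fop, inner_M_eq ξ hperP M hM, Fop_e, M.map_smul,
      inner_smul_right, inner_M_eq ξ hperP M hM]
    ring
  have hfun : (fun kl : ℤ × ℤ =>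
      ‖(inner ℂ (e kl.1) ((Fop.comp M - M.comp Fop) (e kl.2)) : ℂ)‖ ^ 2)
      = fun kl : ℤ × ℤ => ‖(sgn kl.1 - sgn kl.2) * C (kl.1 - kl.2)‖ ^ 2 :=
    funext fun kl => by rw [hentry kl.1 kl.2]
  rw [hfun]
  apply summable_of_sum_le (c := 2 * ∑' m, 4 * D m)
    (Pi.le_def.mpr fun kl => sq_nonneg _)
  intro u
  have hzero : ∀ p : ℤ × ℤ, p ∈ u →
      ‖(sgn p.1 - sgn p.2) * C (p.1 - p.2)‖ ^ 2 ≠ 0 → ¬(0 ≤ p.1 ↔ 0 ≤ p.2) := by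
    intro p _ hne hiff
    apply hne
    have : sgn p.1 = sgn p.2 := by
      by_cases h : 0 ≤ p.1
      · rw [sgn, sgn, if_pos h, if_pos (hiff.mp h)]
      · rw [sgn, sgn, if_neg h, if_neg (fun h' => h (hiff.mpr h'))]
    rw [this, sub_self, zero_mul, norm_zero]
    norm_num
  rw [← Finset.sum_filter_of_ne hzero]
  set v := u.filter (fun p : ℤ × ℤ => ¬(0 ≤ p.1 ↔ 0 ≤ p.2)) with hvdef
  have hv : ∀ p ∈ v, ¬(0 ≤ p.1 ↔ 0 ≤ p.2) := fun p hp => (Finset.mem_filter.mp hp).2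
  have hval : ∀ p ∈ v, ‖(sgn p.1 - sgn p.2) * C (p.1 - p.2)‖ ^ 2
      = 4 * ‖C (p.1 - p.2)‖ ^ 2 := by
    intro p hp
    have hmis := hv p hp
    have h2 : ‖sgn p.1 - sgn p.2‖ = 2 := by
      rcases le_or_gt 0 p.1 with h1 | h1 <;> rcases le_or_gt 0 p.2 with h2 | h2
      · exact absurd (iff_of_true h1 h2) hmis
      · rw [sgn, sgn, if_pos h1, if_neg (not_le.mpr h2)]
        norm_num
      · rw [sgn, sgn, if_neg (not_le.mpr h1), if_pos h2]
        rw [show (-1 : ℂ) - 1 = -2 by ring, norm_neg]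
        norm_num
      · exact absurd (iff_of_false (not_le.mpr h1) (not_le.mpr h2)) hmis
    rw [norm_mul, h2, mul_pow]
    norm_num
  rw [Finset.sum_congr rfl hval]
  apply sum_bound (fun m => 4 * ‖C m‖ ^ 2) (fun m => 4 * D m)
    (fun m => by positivity) (fun m => by positivity) ?_ (hDsum.mul_left 4) v hv
  intro m
  show 2 * (m.natAbs : ℝ) * (4 * ‖C m‖ ^ 2) ≤ 2 * (4 * D m)
  rw [hDval m]
  have hnat : (m.natAbs : ℝ) ≤ ((m.natAbs : ℝ)) ^ 2 := by
    exact_mod_cast Nat.le_self_pow two_ne_zero m.natAbs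
  nlinarith [sq_nonneg (‖C m‖), norm_nonneg (C m), sq_nonneg ((m.natAbs : ℝ)),
    mul_le_mul_of_nonneg_right hnat (sq_nonneg (‖C m‖))]

end
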